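/- Let U ≥ 1 packets each independently and uniformly at random choose one of N ≥ 1 channels and one of L ≥ 1 power levels, modeled as a uniform random function F : {1,…,U} → {1,…,N}×{1,…,L}. For each channel n let S_n(F) be the SIC success count of the power-level choices of those packets that selected channel n, and let T(F) = Σ_{n=1}^N S_n(F) be the total number of successful packets. Then E[T] = N · Σ_{u=1}^U E_u · C(U,u) · (1/N)^u · (1 − 1/N)^{U−u}, where E_u = L^{−u} · Σ_{g : {1,…,u} → {1,…,L}} S(g) is the average success count on a single channel contended by exactly u packets (Theorem 2). -/

import Mathlib

/-- SIC success count of a power-level assignment `g : Fin u → Fin L`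
(levels indexed `0, …, L-1` from highest to lowest received power): the number of
levels containing exactly one packet and such that every higher-power level
contains at most one packet. -/
def sicSuccess {u L : ℕ} (g : Fin u → Fin L) : ℕ :=
  (Finset.univ.filter (fun l : Fin L =>
    (Finset.univ.filter (fun k => g k = l)).card = 1 ∧
    ∀ l', l' < l → (Finset.univ.filter (fun k => g k = l')).card ≤ 1)).card

/-- SIC success count on channel `n` for a joint channel-and-level assignment
`F : Fin U → Fin N × Fin L`. -/
def chanSuccess {U N L : ℕ} (F : Fin U → Fin N × Fin L) (n : Fin N) : ℕ :=
  (Finset.univ.filter (fun l : Fin L =>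
    (Finset.univ.filter (fun u => F u = (n, l))).card = 1 ∧
    ∀ l', l' < l → (Finset.univ.filter (fun u => F u = (n, l'))).card ≤ 1)).card

section Aux
open Finset


def levCount {L : ℕ} (c : Fin L → ℕ) : ℕ :=
  (Finset.univ.filter (fun l : Fin L => c l = 1 ∧ ∀ l', l' < l → c l' ≤ 1)).card

def sicS {α : Type*} [Fintype α] {L : ℕ} (g : α → Fin L) : ℕ :=
  levCount (fun l => (Finset.univ.filter (fun k => g k = l)).card)

lemma levCount_congr {L : ℕ} {c c' : Fin L → ℕ} (h : ∀ l, c l = c' l) :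
    levCount c = levCount c' := by
  have : c = c' := funext h
  rw [this]

lemma fiber_card_equiv {α β : Type*} [Fintype α] [Fintype β] (e : β ≃ α)
    (p : α → Prop) [DecidablePred p] :
    (univ.filter (fun b => p (e b))).card = (univ.filter p).card := by
  rw [← Fintype.card_subtype, ← Fintype.card_subtype]
  exact Fintype.card_congr (e.subtypeEquiv fun b => Iff.rfl)

lemma sicS_comp {α β : Type*} [Fintype α] [Fintype β] {L : ℕ} (e : β ≃ α) (g : α → Fin L) :
    sicS (g ∘ e) = sicS g :=
  levCount_congr fun l => fiber_card_equiv e (fun k => g k = l)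

lemma chan_restrict {U N L : ℕ} (n : Fin N) (A : Finset (Fin U))
    (F : Fin U → Fin N × Fin L) (hF : ∀ u, (F u).1 = n ↔ u ∈ A) :
    chanSuccess F n = sicS (fun a : {u // u ∈ A} => (F a.1).2) := by
  show levCount _ = levCount _
  refine levCount_congr fun l => ?_
  refine Finset.card_bij' (fun u hu => (⟨u, ?_⟩ : {u // u ∈ A})) (fun a _ => a.1) ?_ ?_ ?_ ?_
  · exact (hF u).mp (congrArg Prod.fst (mem_filter.mp hu).2)
  · intro u hu
    simp only [mem_filter, mem_univ, true_and] at hu ⊢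
    exact congrArg Prod.snd hu
  · intro a ha
    simp only [mem_filter, mem_univ, true_and] at ha ⊢
    exact Prod.ext ((hF a.1).mpr a.2) ha
  · intro u hu; rfl
  · intro a ha; rfl

def splitEquiv {U N L : ℕ} (n : Fin N) (A : Finset (Fin U)) :
    {F : Fin U → Fin N × Fin L // ∀ u, (F u).1 = n ↔ u ∈ A} ≃
    (({u // u ∈ A} → Fin L) × ({u // u ∈ Aᶜ} → {m : Fin N // m ≠ n} × Fin L)) where
  toFun F := (fun a => (F.1 a.1).2,
    fun b => (⟨(F.1 b.1).1, fun h => (Finset.mem_compl.mp b.2) ((F.2 b.1).mp h)⟩, (F.1 b.1).2))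
  invFun gh := ⟨fun u => if hu : u ∈ A then (n, gh.1 ⟨u, hu⟩)
      else ((gh.2 ⟨u, Finset.mem_compl.mpr hu⟩).1.1, (gh.2 ⟨u, Finset.mem_compl.mpr hu⟩).2), by
    intro u
    by_cases hu : u ∈ A
    · simp [hu]
    · simp only [dif_neg hu]
      exact ⟨fun h => absurd h (gh.2 ⟨u, Finset.mem_compl.mpr hu⟩).1.2, fun h => absurd h hu⟩⟩
  left_inv := by
    rintro ⟨F, hF⟩
    apply Subtype.ext
    funext u
    by_cases hu : u ∈ A
    · simp only [dif_pos hu]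
      exact Prod.ext ((hF u).mpr hu).symm rfl
    · simp only [dif_neg hu]
  right_inv := by
    rintro ⟨g, h⟩
    refine Prod.ext (funext fun a => ?_) (funext fun b => ?_)
    · simp only [dif_pos a.2]
    · have hb : ¬ b.1 ∈ A := Finset.mem_compl.mp b.2
      simp only [dif_neg hb]

lemma sum_over_A {U N L : ℕ} (n : Fin N) (A : Finset (Fin U)) :
    ∑ F ∈ univ.filter (fun F : Fin U → Fin N × Fin L =>
        univ.filter (fun u => (F u).1 = n) = A), (chanSuccess F n : ℝ)
    = (((N - 1) * L : ℕ) : ℝ) ^ (U - A.card)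
        * ∑ g : Fin A.card → Fin L, (sicSuccess g : ℝ) := by
  classical
  have hcond : ∀ F : Fin U → Fin N × Fin L,
      F ∈ univ.filter (fun F : Fin U → Fin N × Fin L =>
        univ.filter (fun u => (F u).1 = n) = A) ↔ (∀ u, (F u).1 = n ↔ u ∈ A) := by
    intro F
    simp only [mem_filter, mem_univ, true_and, Finset.ext_iff, mem_filter]
  rw [Finset.sum_subtype _ hcond (fun F => (chanSuccess F n : ℝ))]
  rw [Fintype.sum_equiv (splitEquiv n A)
      (fun F => (chanSuccess F.1 n : ℝ)) (fun gh => (sicS gh.1 : ℝ))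
      (fun F => congrArg _ (chan_restrict n A F.1 F.2))]
  rw [Fintype.sum_prod_type]
  have hconst : ∀ g : {u // u ∈ A} → Fin L,
      ∑ _h : {u // u ∈ Aᶜ} → {m : Fin N // m ≠ n} × Fin L, (sicS g : ℝ)
      = (((N - 1) * L : ℕ) : ℝ) ^ (U - A.card) * (sicS g : ℝ) := by
    intro g
    rw [Finset.sum_const, Finset.card_univ, nsmul_eq_mul]
    congr 1
    simp only [Fintype.card_fun, Fintype.card_prod, Fintype.card_coe, Finset.card_compl,
      Fintype.card_subtype_compl, Fintype.card_subtype_eq, Fintype.card_fin]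
    push_cast
    ring
  rw [Finset.sum_congr rfl (fun g _ => hconst g), ← Finset.mul_sum]
  congr 1
  have eA : {u // u ∈ A} ≃ Fin A.card := Fintype.equivFinOfCardEq (Fintype.card_coe A)
  exact Fintype.sum_equiv (Equiv.arrowCongr eA (Equiv.refl (Fin L)))
    (fun g => (sicS g : ℝ)) (fun g => (sicSuccess g : ℝ))
    (fun g => by
      show (sicS g : ℝ) = (sicSuccess ((Equiv.arrowCongr eA (Equiv.refl (Fin L))) g) : ℝ)
      have : sicSuccess ((Equiv.arrowCongr eA (Equiv.refl (Fin L))) g) = sicS (g ∘ eA.symm) := rfl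
      rw [this, sicS_comp eA.symm g])

lemma key_sum {U N L : ℕ} (n : Fin N) :
    ∑ F : Fin U → Fin N × Fin L, (chanSuccess F n : ℝ)
    = ∑ u ∈ Finset.range (U + 1), (U.choose u : ℝ) *
        ((((N - 1) * L : ℕ) : ℝ) ^ (U - u) * ∑ g : Fin u → Fin L, (sicSuccess g : ℝ)) := by
  classical
  rw [← Finset.sum_fiberwise univ
    (fun F : Fin U → Fin N × Fin L => univ.filter (fun u => (F u).1 = n))
    (fun F => (chanSuccess F n : ℝ))]
  rw [Finset.sum_congr rfl (fun A _ => sum_over_A n A)]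
  have hps := Finset.sum_powerset (univ : Finset (Fin U))
    (fun A : Finset (Fin U) => (((N - 1) * L : ℕ) : ℝ) ^ (U - A.card)
      * ∑ g : Fin A.card → Fin L, (sicSuccess g : ℝ))
  rw [Finset.powerset_univ, Finset.card_univ, Fintype.card_fin] at hps
  rw [hps]
  refine Finset.sum_congr rfl fun j _ => ?_
  rw [Finset.sum_congr rfl (fun A hA => by rw [(Finset.mem_powersetCard.mp hA).2])]
  rw [Finset.sum_const, Finset.card_powersetCard, Finset.card_univ, Fintype.card_fin,
    nsmul_eq_mul]

end Aux

/-- Theorem 2: with `U` packets choosing uniformly at random among `N` channels and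
`L` power levels, the expected total number of successful packets
`E[T] = N · Σ_{u=1}^U E_u · C(U,u) · (1/N)^u · (1 − 1/N)^{U−u}`, where
`E_u = L^{-u} · Σ_{g} S(g)` is the average success count of a single channel
contended by exactly `u` packets. -/
theorem stmt3 (U N L : ℕ) (hU : 1 ≤ U) (hN : 1 ≤ N) (hL : 1 ≤ L) :
    (∑ F : Fin U → Fin N × Fin L, (∑ n : Fin N, (chanSuccess F n : ℝ)))
        / ((N : ℝ) * (L : ℝ)) ^ U
    = (N : ℝ) * ∑ u ∈ Finset.Icc 1 U,
        (((L : ℝ) ^ u)⁻¹ * ∑ g : Fin u → Fin L, (sicSuccess g : ℝ)) *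
        (U.choose u : ℝ) * ((1 : ℝ) / N) ^ u * (1 - 1 / (N : ℝ)) ^ (U - u) := by
  classical
  rw [Finset.sum_comm]
  rw [Finset.sum_congr rfl (fun n _ => key_sum n)]
  rw [Finset.sum_const, Finset.card_univ, Fintype.card_fin, nsmul_eq_mul]
  have hins : Finset.range (U + 1) = insert 0 (Finset.Icc 1 U) := by
    ext x; simp only [Finset.mem_range, Finset.mem_insert, Finset.mem_Icc]; omega
  have hR0 : ∑ g : Fin 0 → Fin L, (sicSuccess g : ℝ) = 0 := by
    simp [sicSuccess]
  rw [hins, Finset.sum_insert (by simp), hR0]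
  simp only [mul_zero, zero_add]
  rw [mul_div_assoc, Finset.sum_div]
  congr 1
  refine Finset.sum_congr rfl fun u hu => ?_
  obtain ⟨hu1, hu2⟩ := Finset.mem_Icc.mp hu
  have hN0 : (N : ℝ) ≠ 0 := Nat.cast_ne_zero.mpr (by omega)
  have hL0 : (L : ℝ) ≠ 0 := Nat.cast_ne_zero.mpr (by omega)
  have hcast : (((N - 1) * L : ℕ) : ℝ) = ((N : ℝ) - 1) * L := by
    push_cast [Nat.cast_sub hN]; ring
  have h1N : (1 : ℝ) - 1 / N = ((N : ℝ) - 1) / N := by field_simp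
  have hsplit : ((N : ℝ) * L) ^ U = ((N : ℝ) * L) ^ u * ((N : ℝ) * L) ^ (U - u) := by
    rw [← pow_add]; congr 1; omega
  rw [hcast, h1N, hsplit, div_pow]
  rw [mul_pow ((N : ℝ) - 1) (L : ℝ), mul_pow (N : ℝ) (L : ℝ) u, mul_pow (N : ℝ) (L : ℝ) (U - u)]
  have hNu : (N : ℝ) ^ u ≠ 0 := pow_ne_zero _ hN0
  have hNUu : (N : ℝ) ^ (U - u) ≠ 0 := pow_ne_zero _ hN0
  have hLu : (L : ℝ) ^ u ≠ 0 := pow_ne_zero _ hL0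
  have hLUu : (L : ℝ) ^ (U - u) ≠ 0 := pow_ne_zero _ hL0
  rw [div_pow ((N : ℝ) - 1) (N : ℝ) (U - u)]
  field_simp
  ring
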